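/- Let d ≥ 1, p ≥ 1, let Ω ⊂ ℝ^d be a nonempty open proper subset, and let f be the restriction to Ω of a twice continuously differentiable function on ℝ^d whose compact support is contained in the closure of Ω. Let U ⊂ ℝ² be a nonempty open set and (α, β) ∈ U, and assume there exists s₀ ∈ (0,1) such that for all (α', β') ∈ U and all s ∈ (s₀, 1) the double integral ∫_Ω ∫_Ω |f(x) − f(y)|^p |x−y|^{−d−sp} d_Ω(x)^{−α'} d_Ω(y)^{−β'} dy dx is finite. Then for every θ ∈ (0,1), lim_{s→1⁻} (1−s) ∫_Ω ∫_{Ω ∖ B(x, θ d_Ω(x))} |f(x) − f(y)|^p |x−y|^{−d−sp} d_Ω(x)^{−α} d_Ω(y)^{−β} dy dx = 0, where B(x, r) denotes the open ball of radius r centered at x. -/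

import Mathlib

open MeasureTheory Metric Set Filter
open scoped ENNReal

set_option maxHeartbeats 1000000 in
/-- The far-off-diagonal part of the weighted Gagliardo seminorm of a smooth compactly
supported function vanishes in the limit `s → 1⁻`. -/
theorem weighted_offdiagonal_vanishes
    (d : ℕ) (hd : 1 ≤ d) (p : ℝ) (hp : 1 ≤ p)
    (Ω : Set (EuclideanSpace ℝ (Fin d))) (hΩo : IsOpen Ω) (hΩne : Ω.Nonempty)
    (hΩp : Ω ≠ Set.univ)
    (F : EuclideanSpace ℝ (Fin d) → ℝ) (hF : ContDiff ℝ 2 F)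
    (hFc : HasCompactSupport F) (hFsupp : tsupport F ⊆ closure Ω)
    (U : Set (ℝ × ℝ)) (hU : IsOpen U) (hUne : U.Nonempty)
    (α β : ℝ) (hαβ : (α, β) ∈ U)
    (s₀ : ℝ) (hs₀ : s₀ ∈ Set.Ioo (0 : ℝ) 1)
    (hfin : ∀ α' β' : ℝ, (α', β') ∈ U → ∀ s ∈ Set.Ioo s₀ 1,
      (∫⁻ x in Ω, ∫⁻ y in Ω, ENNReal.ofReal
        (|F x - F y| ^ p / ‖x - y‖ ^ ((d : ℝ) + s * p)
          * (infDist x (frontier Ω)) ^ (-α') * (infDist y (frontier Ω)) ^ (-β'))) ≠ ⊤)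
    (θ : ℝ) (hθ : θ ∈ Set.Ioo (0 : ℝ) 1) :
    Filter.Tendsto
      (fun s : ℝ => (1 - s) *
        (∫⁻ x in Ω, ∫⁻ y in Ω \ Metric.ball x (θ * infDist x (frontier Ω)),
          ENNReal.ofReal
            (|F x - F y| ^ p / ‖x - y‖ ^ ((d : ℝ) + s * p)
              * (infDist x (frontier Ω)) ^ (-α) * (infDist y (frontier Ω)) ^ (-β))).toReal)
      (nhdsWithin 1 (Set.Iio 1)) (nhds 0) := by
  obtain ⟨hθ0, hθ1⟩ := hθ
  obtain ⟨hs₀0, hs₀1⟩ := hs₀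
  have hp0 : (0:ℝ) < p := lt_of_lt_of_le one_pos hp
  set K := frontier Ω with hKdef
  -- the frontier is nonempty and the distance to it is positive on Ω
  have hKne : K.Nonempty := nonempty_frontier_iff.mpr ⟨hΩne, hΩp⟩
  have hDpos : ∀ x ∈ Ω, 0 < infDist x K := by
    intro x hx
    refine (isClosed_frontier.notMem_iff_infDist_pos hKne).mp ?_
    intro hxK
    rw [hΩo.frontier_eq] at hxK
    exact hxK.2 hx
  -- choose s₁ close to 1
  obtain ⟨δ, hδ0, hδU⟩ := Metric.isOpen_iff.mp hU (α, β) hαβ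
  set s₁ : ℝ := max ((s₀ + 1) / 2) (1 - δ / (2 * p)) with hs₁def
  have hs₁0 : s₀ < s₁ := lt_of_lt_of_le (by linarith) (le_max_left _ _)
  have hs₁1 : s₁ < 1 := by
    apply max_lt (by linarith)
    have : 0 < δ / (2 * p) := div_pos hδ0 (by linarith)
    linarith
  set t₁ : ℝ := (1 - s₁) * p with ht₁def
  have ht₁0 : 0 < t₁ := mul_pos (by linarith) hp0
  have ht₁δ : t₁ < δ := by
    have h1 : 1 - δ / (2 * p) ≤ s₁ := le_max_right _ _
    have h2 : (1 - s₁) * p ≤ (δ / (2 * p)) * p := by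
      apply mul_le_mul_of_nonneg_right (by linarith) hp0.le
    have h3 : (δ / (2 * p)) * p = δ / 2 := by field_simp
    rw [ht₁def]
    linarith
  have hU1 : (α + t₁, β) ∈ U := by
    apply hδU
    rw [Metric.mem_ball, Prod.dist_eq]
    have h1 : dist (α + t₁) α = t₁ := by
      rw [Real.dist_eq, add_sub_cancel_left, abs_of_nonneg ht₁0.le]
    have h2 : dist β β = 0 := dist_self β
    rw [h1, h2, max_eq_left ht₁0.le]
    exact ht₁δ
  have hs₁mem : s₁ ∈ Set.Ioo s₀ 1 := ⟨hs₁0, hs₁1⟩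
  set c : ℝ := θ ^ (-t₁) with hcdef
  have hc0 : 0 ≤ c := Real.rpow_nonneg hθ0.le _
  -- measurability of the integrand
  have hFcont : Continuous F := hF.continuous
  have mble : ∀ (e a b : ℝ), Measurable (fun q : EuclideanSpace ℝ (Fin d) × EuclideanSpace ℝ (Fin d) =>
      ENNReal.ofReal (|F q.1 - F q.2| ^ p / ‖q.1 - q.2‖ ^ e
        * (infDist q.1 K) ^ (-a) * (infDist q.2 K) ^ (-b))) := by
    intro e a b
    apply Measurable.ennreal_ofReal
    apply Measurable.mul
    apply Measurable.mul
    apply Measurable.div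
    · exact (((hFcont.comp continuous_fst).sub
        (hFcont.comp continuous_snd)).abs.measurable).pow measurable_const
    · exact (((continuous_fst.sub continuous_snd).norm).measurable).pow measurable_const
    · exact (((continuous_infDist_pt K).comp continuous_fst).measurable).pow measurable_const
    · exact (((continuous_infDist_pt K).comp continuous_snd).measurable).pow measurable_const
  -- the two reference integrals
  set I₁ : ℝ≥0∞ := ∫⁻ x in Ω, ∫⁻ y in Ω, ENNReal.ofReal
      (|F x - F y| ^ p / ‖x - y‖ ^ ((d : ℝ) + s₁ * p)
        * (infDist x K) ^ (-(α + t₁)) * (infDist y K) ^ (-β)) with hI₁def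
  set I₂ : ℝ≥0∞ := ∫⁻ x in Ω, ∫⁻ y in Ω, ENNReal.ofReal
      (|F x - F y| ^ p / ‖x - y‖ ^ ((d : ℝ) + s₁ * p)
        * (infDist x K) ^ (-α) * (infDist y K) ^ (-β)) with hI₂def
  have hI₁ : I₁ ≠ ⊤ := hfin (α + t₁) β hU1 s₁ hs₁mem
  have hI₂ : I₂ ≠ ⊤ := hfin α β hαβ s₁ hs₁mem
  set C : ℝ≥0∞ := ENNReal.ofReal c * (I₁ + I₂) with hCdef
  have hC : C ≠ ⊤ := by
    rw [hCdef]
    exact ENNReal.mul_ne_top ENNReal.ofReal_ne_top (by simp [hI₁, hI₂])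
  -- the pointwise bound
  have hptwise : ∀ s ∈ Set.Icc s₁ 1, ∀ x ∈ Ω, ∀ y ∈ Ω \ Metric.ball x (θ * infDist x K),
      |F x - F y| ^ p / ‖x - y‖ ^ ((d : ℝ) + s * p)
        * (infDist x K) ^ (-α) * (infDist y K) ^ (-β)
      ≤ c * (|F x - F y| ^ p / ‖x - y‖ ^ ((d : ℝ) + s₁ * p)
            * (infDist x K) ^ (-(α + t₁)) * (infDist y K) ^ (-β)
          + |F x - F y| ^ p / ‖x - y‖ ^ ((d : ℝ) + s₁ * p)
            * (infDist x K) ^ (-α) * (infDist y K) ^ (-β)) := by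
    intro s hs x hx y hy
    set A : ℝ := |F x - F y| ^ p with hAdef
    set a : ℝ := ‖x - y‖ with hadef
    set D : ℝ := infDist x K with hDdef
    set Dy : ℝ := infDist y K with hDydef
    have hD0 : 0 < D := hDpos x hx
    have hDy0 : 0 ≤ Dy ^ (-β) := Real.rpow_nonneg infDist_nonneg _
    have hA0 : 0 ≤ A := Real.rpow_nonneg (abs_nonneg _) _
    have hθD : θ * D ≤ a := by
      have := hy.2
      rw [Metric.mem_ball, not_lt] at this
      calc θ * D ≤ dist y x := this
        _ = ‖x - y‖ := by rw [dist_eq_norm, norm_sub_rev]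
    have hθD0 : 0 < θ * D := mul_pos hθ0 hD0
    have ha0 : 0 < a := lt_of_lt_of_le hθD0 hθD
    set t : ℝ := (s - s₁) * p with htdef
    have ht0 : 0 ≤ t := mul_nonneg (by linarith [hs.1]) hp0.le
    have htt₁ : t ≤ t₁ := by
      rw [htdef, ht₁def]
      apply mul_le_mul_of_nonneg_right (by linarith [hs.2]) hp0.le
    -- split the power of a
    have hsplit : a ^ ((d : ℝ) + s * p) = a ^ ((d : ℝ) + s₁ * p) * a ^ t := by
      rw [← Real.rpow_add ha0, htdef]; ring_nf
    have hX0 : 0 < a ^ ((d : ℝ) + s₁ * p) := Real.rpow_pos_of_pos ha0 _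
    have hdiv : A / a ^ ((d : ℝ) + s * p)
        = A / a ^ ((d : ℝ) + s₁ * p) * a ^ (-t) := by
      rw [hsplit, Real.rpow_neg ha0.le]
      field_simp
    -- bound a ^ (-t)
    have h1 : a ^ (-t) ≤ (θ * D) ^ (-t) := by
      rw [Real.rpow_neg ha0.le, Real.rpow_neg hθD0.le]
      exact inv_anti₀ (Real.rpow_pos_of_pos hθD0 t)
        (Real.rpow_le_rpow hθD0.le hθD ht0)
    have h2 : (θ * D) ^ (-t) = θ ^ (-t) * D ^ (-t) := Real.mul_rpow hθ0.le hD0.le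
    have h3 : θ ^ (-t) ≤ c := by
      rw [hcdef]
      exact Real.rpow_le_rpow_of_exponent_ge hθ0 hθ1.le (by linarith)
    have h4 : D ^ (-t) ≤ D ^ (-t₁) + 1 := by
      rcases le_total D 1 with hD1 | hD1
      · have : D ^ (-t) ≤ D ^ (-t₁) :=
          Real.rpow_le_rpow_of_exponent_ge hD0 hD1 (by linarith)
        linarith
      · have : D ^ (-t) ≤ D ^ (0 : ℝ) :=
          Real.rpow_le_rpow_of_exponent_le hD1 (by linarith)
        rw [Real.rpow_zero] at this
        have h5 : 0 ≤ D ^ (-t₁) := Real.rpow_nonneg hD0.le _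
        linarith
    have hbound : a ^ (-t) ≤ c * (D ^ (-t₁) + 1) := by
      calc a ^ (-t) ≤ θ ^ (-t) * D ^ (-t) := by rw [← h2]; exact h1
        _ ≤ c * (D ^ (-t₁) + 1) := by
          apply mul_le_mul h3 h4 (Real.rpow_nonneg hD0.le _) hc0
    -- combine
    have hDsplit : D ^ (-(α + t₁)) = D ^ (-t₁) * D ^ (-α) := by
      rw [← Real.rpow_add hD0]; ring_nf
    rw [hdiv, hDsplit]
    have hfac : 0 ≤ A / a ^ ((d : ℝ) + s₁ * p) * D ^ (-α) * Dy ^ (-β) :=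
      mul_nonneg (mul_nonneg (div_nonneg hA0 hX0.le) (Real.rpow_nonneg hD0.le _)) hDy0
    calc A / a ^ ((d : ℝ) + s₁ * p) * a ^ (-t) * D ^ (-α) * Dy ^ (-β)
        = (A / a ^ ((d : ℝ) + s₁ * p) * D ^ (-α) * Dy ^ (-β)) * a ^ (-t) := by ring
      _ ≤ (A / a ^ ((d : ℝ) + s₁ * p) * D ^ (-α) * Dy ^ (-β)) * (c * (D ^ (-t₁) + 1)) :=
          mul_le_mul_of_nonneg_left hbound hfac
      _ = c * (A / a ^ ((d : ℝ) + s₁ * p) * (D ^ (-t₁) * D ^ (-α)) * Dy ^ (-β)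
          + A / a ^ ((d : ℝ) + s₁ * p) * D ^ (-α) * Dy ^ (-β)) := by ring
  -- the integral bound
  have key : ∀ s ∈ Set.Icc s₁ 1,
      (∫⁻ x in Ω, ∫⁻ y in Ω \ Metric.ball x (θ * infDist x K),
        ENNReal.ofReal
          (|F x - F y| ^ p / ‖x - y‖ ^ ((d : ℝ) + s * p)
            * (infDist x K) ^ (-α) * (infDist y K) ^ (-β))) ≤ C := by
    intro s hs
    have step1 : ∀ x ∈ Ω,
        (∫⁻ y in Ω \ Metric.ball x (θ * infDist x K),
          ENNReal.ofReal
            (|F x - F y| ^ p / ‖x - y‖ ^ ((d : ℝ) + s * p)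
              * (infDist x K) ^ (-α) * (infDist y K) ^ (-β)))
        ≤ ENNReal.ofReal c * (∫⁻ y in Ω, ENNReal.ofReal
              (|F x - F y| ^ p / ‖x - y‖ ^ ((d : ℝ) + s₁ * p)
                * (infDist x K) ^ (-(α + t₁)) * (infDist y K) ^ (-β)))
          + ENNReal.ofReal c * (∫⁻ y in Ω, ENNReal.ofReal
              (|F x - F y| ^ p / ‖x - y‖ ^ ((d : ℝ) + s₁ * p)
                * (infDist x K) ^ (-α) * (infDist y K) ^ (-β))) := by
      intro x hx
      have m1 : Measurable fun y => ENNReal.ofReal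
          (|F x - F y| ^ p / ‖x - y‖ ^ ((d : ℝ) + s₁ * p)
            * (infDist x K) ^ (-(α + t₁)) * (infDist y K) ^ (-β)) :=
        Measurable.ennreal_ofReal <|
          ((((continuous_const.sub hFcont).abs.measurable).pow measurable_const).div
            ((((continuous_const.sub continuous_id).norm).measurable).pow
              measurable_const)).mul_const _ |>.mul
            (((continuous_infDist_pt K).measurable).pow measurable_const)
      have hpt : ∀ y ∈ Ω \ Metric.ball x (θ * infDist x K),
          ENNReal.ofReal
            (|F x - F y| ^ p / ‖x - y‖ ^ ((d : ℝ) + s * p)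
              * (infDist x K) ^ (-α) * (infDist y K) ^ (-β))
          ≤ ENNReal.ofReal c * ENNReal.ofReal
              (|F x - F y| ^ p / ‖x - y‖ ^ ((d : ℝ) + s₁ * p)
                * (infDist x K) ^ (-(α + t₁)) * (infDist y K) ^ (-β))
            + ENNReal.ofReal c * ENNReal.ofReal
              (|F x - F y| ^ p / ‖x - y‖ ^ ((d : ℝ) + s₁ * p)
                * (infDist x K) ^ (-α) * (infDist y K) ^ (-β)) := by
        intro y hy
        refine le_trans (ENNReal.ofReal_le_ofReal (hptwise s hs x hx y hy)) ?_
        rw [ENNReal.ofReal_mul hc0, ← mul_add]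
        exact mul_le_mul_right ENNReal.ofReal_add_le _
      refine le_trans
        (setLIntegral_mono' (hΩo.measurableSet.diff measurableSet_ball) hpt) ?_
      refine le_trans (lintegral_mono_set diff_subset) ?_
      rw [lintegral_add_left' ((m1.const_mul _).aemeasurable),
        lintegral_const_mul' _ _ ENNReal.ofReal_ne_top,
        lintegral_const_mul' _ _ ENNReal.ofReal_ne_top]
    refine le_trans (setLIntegral_mono' hΩo.measurableSet step1) ?_
    have m1 : Measurable fun x => ∫⁻ y in Ω, ENNReal.ofReal
        (|F x - F y| ^ p / ‖x - y‖ ^ ((d : ℝ) + s₁ * p)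
          * (infDist x K) ^ (-(α + t₁)) * (infDist y K) ^ (-β)) :=
      (mble ((d : ℝ) + s₁ * p) (α + t₁) β).lintegral_prod_right'
    rw [lintegral_add_left' ((m1.const_mul _).aemeasurable),
      lintegral_const_mul' _ _ ENNReal.ofReal_ne_top,
      lintegral_const_mul' _ _ ENNReal.ofReal_ne_top,
      hCdef, hI₁def, hI₂def, mul_add]
  -- squeeze
  have hev : ∀ᶠ s in nhdsWithin (1:ℝ) (Set.Iio 1), s ∈ Set.Ioo s₁ 1 := by
    filter_upwards [mem_nhdsWithin_of_mem_nhds (Ioi_mem_nhds hs₁1), self_mem_nhdsWithin]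
      with s h1 h2
    exact ⟨h1, h2⟩
  apply squeeze_zero' (g := fun s => (1 - s) * C.toReal)
  · filter_upwards [hev] with s hs
    exact mul_nonneg (by linarith [hs.2]) ENNReal.toReal_nonneg
  · filter_upwards [hev] with s hs
    apply mul_le_mul_of_nonneg_left _ (by linarith [hs.2])
    exact ENNReal.toReal_mono hC (key s ⟨hs.1.le, hs.2.le⟩)
  · have hcont : Continuous fun s : ℝ => (1 - s) * C.toReal :=
      (continuous_const.sub continuous_id).mul continuous_const
    have := hcont.tendsto 1
    simp only [sub_self, zero_mul] at this
    exact tendsto_nhdsWithin_of_tendsto_nhds this
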